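/- Every finite simple graph G admits a total labelling, assigning to each edge a label in {1,2,3} and to each vertex a label in {1,2}, such that for every edge uv of G the quantity ρ^t(u) differs from ρ^t(v), where for a vertex w, ρ^t(w) is the product of the label of w itself with the labels of all edges incident to w. -/

import Mathlib

open Finset

/-- The product of the labels assigned by `ℓ` to the edges incident to `v`
(an empty product equals `1`). -/
def vertexProd {V : Type*} [Fintype V] [DecidableEq V] (G : SimpleGraph V)
    [DecidableRel G.Adj] (ℓ : Sym2 V → ℕ) (v : V) : ℕ :=
  ∏ e ∈ G.incidenceFinset v, ℓ e

/-- Classification of a product/sum of values in `{0,1,2}` (shifted by 1 for products). -/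
lemma prodsum_aux {α : Type*} [DecidableEq α] (g : α → ℕ) (s : Finset α)
    (h : ∀ x ∈ s, g x ≤ 2) :
    (∏ x ∈ s, (g x + 1)) =
      2 ^ (s.filter fun x => g x = 1).card * 3 ^ (s.filter fun x => g x = 2).card ∧
    (∑ x ∈ s, g x) =
      (s.filter fun x => g x = 1).card + 2 * (s.filter fun x => g x = 2).card := by
  classical
  induction s using Finset.induction_on with
  | empty => simp
  | @insert a s ha ih =>
    have hga : g a ≤ 2 := h a (mem_insert_self a s)
    have hs : ∀ x ∈ s, g x ≤ 2 := fun x hx => h x (mem_insert_of_mem hx)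
    obtain ⟨ih1, ih2⟩ := ih hs
    have h1 : a ∉ s.filter fun x => g x = 1 := fun hc => ha (mem_of_mem_filter a hc)
    have h2 : a ∉ s.filter fun x => g x = 2 := fun hc => ha (mem_of_mem_filter a hc)
    rw [Finset.prod_insert ha, Finset.sum_insert ha, Finset.filter_insert, Finset.filter_insert]
    have hcases : g a = 0 ∨ g a = 1 ∨ g a = 2 := by omega
    rcases hcases with hg | hg | hg <;>
      rw [hg] <;>
      simp only [ih1, ih2, Finset.card_insert_of_notMem h1,
        Finset.card_insert_of_notMem h2, reduceIte, if_true, if_false,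
        Nat.one_ne_zero, Nat.zero_ne_one, pow_succ, OfNat.ofNat_ne_one,
        Nat.reduceEqDiff] <;>
      norm_num <;>
      constructor <;> first | ring | omega

lemma fact2 (x y : ℕ) : (2 ^ x * 3 ^ y).factorization 2 = x := by
  rw [Nat.factorization_mul (pow_ne_zero x (by norm_num)) (pow_ne_zero y (by norm_num)),
    Nat.Prime.factorization_pow Nat.prime_two, Nat.Prime.factorization_pow Nat.prime_three]
  simp [Finsupp.single_apply]

lemma fact3 (x y : ℕ) : (2 ^ x * 3 ^ y).factorization 3 = y := by
  rw [Nat.factorization_mul (pow_ne_zero x (by norm_num)) (pow_ne_zero y (by norm_num)),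
    Nat.Prime.factorization_pow Nat.prime_two, Nat.Prime.factorization_pow Nat.prime_three]
  simp [Finsupp.single_apply]

lemma pow23_inj {a b a' b' : ℕ} (h : 2 ^ a * 3 ^ b = 2 ^ a' * 3 ^ b') :
    a = a' ∧ b = b' := by
  constructor
  · have h2 := congrArg (fun n => n.factorization 2) h
    simpa only [fact2] using h2
  · have h3 := congrArg (fun n => n.factorization 3) h
    simpa only [fact3] using h3

lemma incidence_prod {V : Type*} [Fintype V] [DecidableEq V] (G : SimpleGraph V)
    [DecidableRel G.Adj] (ℓ : Sym2 V → ℕ) (v : V) :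
    ∏ e ∈ G.incidenceFinset v, ℓ e = ∏ w ∈ G.neighborFinset v, ℓ s(v, w) := by
  classical
  have himg : G.incidenceFinset v = (G.neighborFinset v).image (fun w => s(v, w)) := by
    ext e
    simp only [Finset.mem_image, SimpleGraph.mem_incidenceFinset,
      SimpleGraph.mem_neighborFinset]
    constructor
    · intro he
      induction e using Sym2.ind with
      | _ x y =>
        rw [SimpleGraph.mk'_mem_incidenceSet_iff] at he
        obtain ⟨hadj, h | h⟩ := he
        · subst h; exact ⟨y, hadj, rfl⟩
        · subst h; exact ⟨x, hadj.symm, Sym2.eq_swap⟩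
    · rintro ⟨w, hadj, rfl⟩
      exact (SimpleGraph.mk'_mem_incidenceSet_iff G).mpr ⟨hadj, Or.inl rfl⟩
  rw [himg, Finset.prod_image]
  intro x _ y _ hxy
  exact Sym2.congr_right.mp hxy

set_option maxHeartbeats 1600000 in
/-- Kalkowski's algorithm: induction over the set `P` of processed vertices. -/
lemma kalkowski {V : Type*} [Fintype V] [DecidableEq V] (G : SimpleGraph V)
    [DecidableRel G.Adj] (P : Finset V) :
    ∃ (f : V → V → ℕ) (σ : V → ℕ),
      (∀ u v, f u v = f v u) ∧
      (∀ u v, f u v ≤ 2) ∧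
      (∀ u v, u ∉ P → f u v = 1) ∧
      (∀ u ∈ P, (∑ w ∈ G.neighborFinset u, f u w) ≤ σ u ∧
        σ u ≤ (∑ w ∈ G.neighborFinset u, f u w) + 1) ∧
      (∀ u ∈ P, ∀ v ∈ P, G.Adj u v → σ u ≠ σ v) := by
  classical
  induction P using Finset.induction_on with
  | empty =>
    exact ⟨fun _ _ => 1, fun _ => 0, fun _ _ => rfl, fun _ _ => one_le_two,
      fun _ _ _ => rfl, fun u hu => absurd hu (Finset.notMem_empty u),
      fun u hu => absurd hu (Finset.notMem_empty u)⟩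
  | @insert a P ha ih =>
    obtain ⟨f, σ, hsym, hle2, hout, hrange, hproper⟩ := ih
    set Wt : V → ℕ := fun u => ∑ w ∈ G.neighborFinset u, f u w with hWt
    set N : Finset V := G.neighborFinset a ∩ P with hN
    set Pos : Finset V := N.filter (fun u => σ u = Wt u + 1) with hPos
    set Neg : Finset V := N.filter (fun u => ¬ σ u = Wt u + 1) with hNeg
    set degA : ℕ := (G.neighborFinset a).card with hdegA
    have hNsub : N ⊆ G.neighborFinset a := Finset.inter_subset_left
    have hNP : N ⊆ P := Finset.inter_subset_right
    have hNegle : Neg.card ≤ degA :=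
      Finset.card_le_card ((Finset.filter_subset _ _).trans hNsub)
    have hPosNeg : Pos.card + Neg.card = N.card :=
      Finset.card_filter_add_card_filter_not _
    -- choose the target value m
    have hIccCard : (Finset.Icc (degA - Neg.card) (degA + Pos.card + 1)).card
        = Pos.card + Neg.card + 2 := by
      rw [Nat.card_Icc]; omega
    have himgcard : (N.image σ).card < (Finset.Icc (degA - Neg.card) (degA + Pos.card + 1)).card := by
      rw [hIccCard]
      calc (N.image σ).card ≤ N.card := Finset.card_image_le
        _ < Pos.card + Neg.card + 2 := by omega
    have hnsub : ¬ (Finset.Icc (degA - Neg.card) (degA + Pos.card + 1)) ⊆ N.image σ := by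
      intro hsub
      exact absurd (Finset.card_le_card hsub) (by omega)
    obtain ⟨m, hmIcc, hmimg⟩ := Finset.not_subset.mp hnsub
    rw [Finset.mem_Icc] at hmIcc
    -- decompose m
    obtain ⟨tp, tn, o, htp, htn, ho, heq⟩ :
        ∃ tp tn o : ℕ, tp ≤ Pos.card ∧ tn ≤ Neg.card ∧ o ≤ 1 ∧
          m + tn = degA + tp + o := by
      rcases le_or_gt m degA with hle | hlt
      · exact ⟨0, degA - m, 0, by omega, by omega, by omega, by omega⟩
      · rcases le_or_gt m (degA + Pos.card) with hle2 | hlt2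
        · exact ⟨m - degA, 0, 0, by omega, by omega, by omega, by omega⟩
        · exact ⟨Pos.card, 0, 1, le_rfl, by omega, le_rfl, by omega⟩
    obtain ⟨Tp, hTpsub, hTpcard⟩ := Finset.exists_subset_card_eq htp
    obtain ⟨Tn, hTnsub, hTncard⟩ := Finset.exists_subset_card_eq htn
    have hdisj : Disjoint Tp Tn := by
      apply Finset.disjoint_left.mpr
      intro x hx1 hx2
      have h1 := (Finset.mem_filter.mp (hTpsub hx1)).2
      have h2 := (Finset.mem_filter.mp (hTnsub hx2)).2
      exact h2 h1
    set T : Finset V := Tp ∪ Tn with hT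
    have hTN : T ⊆ N := Finset.union_subset (hTpsub.trans (Finset.filter_subset _ _))
      (hTnsub.trans (Finset.filter_subset _ _))
    have hTP : T ⊆ P := hTN.trans hNP
    have haT : a ∉ T := fun hc => ha (hTP hc)
    set z : V → ℕ := fun u => if σ u = Wt u + 1 then 2 else 0 with hz
    set f' : V → V → ℕ := fun x y =>
      if x = a ∧ y ∈ T then z y else if y = a ∧ x ∈ T then z x else f x y with hf'
    set σ' : V → ℕ := Function.update σ a m with hσ'
    -- basic facts about f'
    have hsym' : ∀ x y, f' x y = f' y x := by
      intro x y
      simp only [hf']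
      by_cases hx : x = a <;> by_cases hy : y = a <;>
        by_cases hxT : x ∈ T <;> by_cases hyT : y ∈ T <;>
        (simp [hx, hy, hxT, hyT, haT]; try exact hsym _ _)
    have hzle : ∀ x, z x ≤ 2 := by
      intro x
      simp only [hz]
      split_ifs <;> omega
    have hfa : ∀ w, f' a w = if w ∈ T then z w else 1 := by
      intro w
      by_cases hw : w ∈ T
      · have h1 : f' a w = z w := by simp only [hf']; simp [hw]
        rw [h1, if_pos hw]
      · have h1 : f' a w = f a w := by simp only [hf']; simp [hw, haT]
        rw [h1, if_neg hw, hout a w ha]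
    have hfT : ∀ u ∈ T, f' u a = z u := by
      intro u hu
      have hua : u ≠ a := fun hc => haT (hc ▸ hu)
      simp only [hf']
      simp [hua, hu]
    have hfother : ∀ u w, u ≠ a → (u ∈ T → w ≠ a) → f' u w = f u w := by
      intro u w hua hw
      simp only [hf']
      by_cases huT : u ∈ T
      · have hwa : w ≠ a := hw huT
        simp [hua, hwa]
      · simp [hua, huT]
    -- sums
    set Wt' : V → ℕ := fun u => ∑ w ∈ G.neighborFinset u, f' u w with hWt'
    have hWunchanged : ∀ u, u ≠ a → u ∉ T → Wt' u = Wt u := by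
      intro u hua huT
      apply Finset.sum_congr rfl
      intro w _
      exact hfother u w hua (fun hc => absurd hc huT)
    have haNbr : ∀ u ∈ T, a ∈ G.neighborFinset u := by
      intro u hu
      have : u ∈ G.neighborFinset a := hNsub (hTN hu)
      rw [SimpleGraph.mem_neighborFinset] at this ⊢
      exact this.symm
    have hWT : ∀ u ∈ T, Wt' u = (∑ w ∈ G.neighborFinset u \ {a}, f u w) + z u ∧
        Wt u = (∑ w ∈ G.neighborFinset u \ {a}, f u w) + 1 := by
      intro u hu
      have hua : u ≠ a := fun hc => haT (hc ▸ hu)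
      constructor
      · show (∑ w ∈ G.neighborFinset u, f' u w) = _
        rw [Finset.sum_eq_sum_sdiff_singleton_add (haNbr u hu) (f' u)]
        congr 1
        · apply Finset.sum_congr rfl
          intro w hw
          have hwa : w ≠ a := fun hc => (Finset.mem_sdiff.mp hw).2 (by simp [hc])
          exact hfother u w hua (fun _ => hwa)
        · exact hfT u hu
      · show (∑ w ∈ G.neighborFinset u, f u w) = _
        rw [Finset.sum_eq_sum_sdiff_singleton_add (haNbr u hu) (f u)]
        congr 1
        rw [hsym, hout a u ha]
    -- the new sum at a
    have hWa' : Wt' a + (tp + tn) = 2 * tp + degA := by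
      have h1 : Wt' a = ∑ w ∈ G.neighborFinset a, (if w ∈ T then z w else 1) :=
        Finset.sum_congr rfl (fun w _ => hfa w)
      rw [h1, Finset.sum_ite]
      have hfilT : (G.neighborFinset a).filter (fun w => w ∈ T) = T := by
        rw [Finset.filter_mem_eq_inter, Finset.inter_eq_right]
        exact hTN.trans hNsub
      have hTz : ∑ w ∈ T, z w = 2 * tp := by
        rw [hT, Finset.sum_union hdisj]
        have h2 : ∑ w ∈ Tp, z w = 2 * tp := by
          have hzw : ∀ w ∈ Tp, z w = 2 := by
            intro w hw
            simp only [hz]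
            exact if_pos (Finset.mem_filter.mp (hTpsub hw)).2
          rw [Finset.sum_congr rfl hzw, Finset.sum_const, hTpcard, smul_eq_mul, mul_comm]
        have h3 : ∑ w ∈ Tn, z w = 0 := by
          apply Finset.sum_eq_zero
          intro w hw
          simp only [hz]
          exact if_neg (Finset.mem_filter.mp (hTnsub hw)).2
        rw [h2, h3, add_zero]
      rw [hfilT, hTz, Finset.sum_const, smul_eq_mul, mul_one]
      have hcards := Finset.card_filter_add_card_filter_not
        (s := G.neighborFinset a) (p := fun w => w ∈ T)
      rw [hfilT] at hcards
      have hTcard : T.card = tp + tn := by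
        rw [hT, Finset.card_union_of_disjoint hdisj, hTpcard, hTncard]
      omega
    refine ⟨f', σ', hsym', ?_, ?_, ?_, ?_⟩
    · -- bound 2
      intro u v
      simp only [hf']
      split_ifs <;> first | exact hzle _ | exact hle2 u v
    · -- outside insert a P
      intro u v hu
      have hua : u ≠ a := fun hc => hu (hc ▸ Finset.mem_insert_self a P)
      have huP : u ∉ P := fun hc => hu (Finset.mem_insert_of_mem hc)
      rw [hfother u v hua (fun hc => absurd (hTP hc) huP)]
      exact hout u v huP
    · -- range invariant
      intro u hu
      rcases Finset.mem_insert.mp hu with rfl | huP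
      · have hσa : σ' u = m := Function.update_self u m σ
        have hfold : Wt' u = ∑ w ∈ G.neighborFinset u, f' u w := rfl
        omega
      · have hua : u ≠ a := fun hc => ha (hc ▸ huP)
        have hσu : σ' u = σ u := Function.update_of_ne hua m σ
        by_cases huT : u ∈ T
        · obtain ⟨hW1, hW2⟩ := hWT u huT
          have hr := hrange u huP
          have hfold1 : Wt' u = ∑ w ∈ G.neighborFinset u, f' u w := rfl
          have hfold2 : Wt u = ∑ w ∈ G.neighborFinset u, f u w := rfl
          by_cases hcond : σ u = Wt u + 1
          · have hzu : z u = 2 := by simp only [hz]; exact if_pos hcond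
            omega
          · have hzu : z u = 0 := by simp only [hz]; exact if_neg hcond
            omega
        · have hfold1 : Wt' u = ∑ w ∈ G.neighborFinset u, f' u w := rfl
          have hfold2 : Wt u = ∑ w ∈ G.neighborFinset u, f u w := rfl
          have hun := hWunchanged u hua huT
          have hr := hrange u huP
          omega
    · -- properness
      intro u hu v hv hadj
      rcases Finset.mem_insert.mp hu with rfl | huP
      · rcases Finset.mem_insert.mp hv with rfl | hvP
        · exact absurd hadj (G.loopless.irrefl _)
        · have hva : v ≠ u := fun hc => ha (hc ▸ hvP)
          have h1 : σ' u = m := Function.update_self u m σ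
          have h2 : σ' v = σ v := Function.update_of_ne hva m σ
          rw [h1, h2]
          intro hc
          apply hmimg
          apply Finset.mem_image.mpr
          refine ⟨v, ?_, hc.symm⟩
          rw [hN, Finset.mem_inter, SimpleGraph.mem_neighborFinset]
          exact ⟨hadj, hvP⟩
      · rcases Finset.mem_insert.mp hv with rfl | hvP
        · have hua : u ≠ v := fun hc => ha (hc ▸ huP)
          have h1 : σ' v = m := Function.update_self v m σ
          have h2 : σ' u = σ u := Function.update_of_ne hua m σ
          rw [h1, h2]
          intro hc
          apply hmimg
          apply Finset.mem_image.mpr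
          refine ⟨u, ?_, hc⟩
          rw [hN, Finset.mem_inter, SimpleGraph.mem_neighborFinset]
          exact ⟨hadj.symm, huP⟩
        · have hua : u ≠ a := fun hc => ha (hc ▸ huP)
          have hva : v ≠ a := fun hc => ha (hc ▸ hvP)
          have h1 : σ' u = σ u := Function.update_of_ne hua m σ
          have h2 : σ' v = σ v := Function.update_of_ne hva m σ
          rw [h1, h2]
          exact hproper u huP v hvP hadj

/-- Every finite simple graph `G` admits a p-proper total labelling assigning labels
in `{1,2,3}` to the edges and labels in `{1,2}` to the vertices: for every edge `uv`,
the product `ρᵗ(u)` of the label of `u` with the labels of the edges incident to `u`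
differs from `ρᵗ(v)`. -/
theorem stmt_3 {V : Type*} [Fintype V] [DecidableEq V] (G : SimpleGraph V)
    [DecidableRel G.Adj] :
    ∃ (ℓe : Sym2 V → ℕ) (ℓv : V → ℕ),
      (∀ e ∈ G.edgeSet, ℓe e ∈ ({1, 2, 3} : Set ℕ)) ∧
      (∀ v : V, ℓv v ∈ ({1, 2} : Set ℕ)) ∧
      ∀ u v : V, G.Adj u v →
        ℓv u * vertexProd G ℓe u ≠ ℓv v * vertexProd G ℓe v := by
  classical
  obtain ⟨f, σ, hsym, hle2, _, hrange, hproper⟩ := kalkowski G (Finset.univ : Finset V)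
  have hrange' : ∀ v : V, (∑ w ∈ G.neighborFinset v, f v w) ≤ σ v ∧
      σ v ≤ (∑ w ∈ G.neighborFinset v, f v w) + 1 := fun v => hrange v (Finset.mem_univ v)
  obtain ⟨ℓE, hℓE⟩ : ∃ ℓE : Sym2 V → ℕ, ∀ x y, ℓE s(x, y) = f x y + 1 :=
    ⟨Sym2.lift ⟨fun x y => f x y + 1, fun x y => by show f x y + 1 = f y x + 1; rw [hsym x y]⟩,
      fun x y => rfl⟩
  refine ⟨ℓE, fun v => (σ v - ∑ w ∈ G.neighborFinset v, f v w) + 1, ?_, ?_, ?_⟩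
  · intro e _
    induction e using Sym2.ind with
    | _ x y =>
      have := hle2 x y
      rw [hℓE]
      simp only [Set.mem_insert_iff, Set.mem_singleton_iff]
      omega
  · intro v
    have h1 := (hrange' v).1
    have h2 := (hrange' v).2
    simp only [Set.mem_insert_iff, Set.mem_singleton_iff]
    omega
  · intro u v hadj heq
    have key : ∀ x : V,
        ((σ x - ∑ w ∈ G.neighborFinset x, f x w) + 1) * vertexProd G ℓE x =
          2 ^ (((G.neighborFinset x).filter fun w => f x w = 1).card +
              (σ x - ∑ w ∈ G.neighborFinset x, f x w)) *
            3 ^ ((G.neighborFinset x).filter fun w => f x w = 2).card ∧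
        σ x = (((G.neighborFinset x).filter fun w => f x w = 1).card +
              (σ x - ∑ w ∈ G.neighborFinset x, f x w)) +
            2 * ((G.neighborFinset x).filter fun w => f x w = 2).card := by
      intro x
      obtain ⟨hp, hs⟩ := prodsum_aux (f x) (G.neighborFinset x) (fun w _ => hle2 x w)
      have hW1 := (hrange' x).1
      have hW2 := (hrange' x).2
      have hvp : vertexProd G ℓE x = ∏ w ∈ G.neighborFinset x, (f x w + 1) := by
        rw [vertexProd, incidence_prod]
        exact Finset.prod_congr rfl (fun w _ => hℓE x w)
      have hc1 : (σ x - ∑ w ∈ G.neighborFinset x, f x w) ≤ 1 := by omega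
      constructor
      · rw [hvp, hp]
        rcases Nat.le_one_iff_eq_zero_or_eq_one.mp hc1 with h | h <;> rw [h]
        · simp
        · rw [pow_add]; ring
      · omega
    obtain ⟨hpu, hsu⟩ := key u
    obtain ⟨hpv, hsv⟩ := key v
    rw [hpu, hpv] at heq
    obtain ⟨h1, h2⟩ := pow23_inj heq
    exact hproper u (Finset.mem_univ u) v (Finset.mem_univ v) hadj (by rw [hsu, hsv, h1, h2])
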